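/- Let G be a countable group and a, a', b, b' p.m.p. actions of G on standard probability spaces. If a is weakly contained in a' and b is weakly contained in b', then the product action a × b is weakly contained in a' × b'. -/

import Mathlib

set_option maxHeartbeats 1000000
set_option linter.unusedSectionVars false

open MeasureTheory

/-- The itinerary map of an observable `φ` over a finite window `F`. -/
def obsMap {G X : Type*} (act : G → X → X) (φ : X → ℕ) (F : Finset G) (x : X) : F → ℕ :=
  fun f => φ (act f x)

/-- Weak containment of p.m.p. actions (Kechris): the first action is weakly contained
in the second. -/
def WeaklyContained {G X Y : Type*} [MeasurableSpace X] [MeasurableSpace Y]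
    (actA : G → X → X) (μ : Measure X) (actB : G → Y → Y) (ν : Measure Y) : Prop :=
  ∀ ε : ℝ, 0 < ε → ∀ (F : Finset G) (φ : X → ℕ), Measurable φ →
    ∃ ψ : Y → ℕ, Measurable ψ ∧
      ∑' u : F → ℕ, |(μ.map (obsMap actA φ F) {u}).toReal -
        (ν.map (obsMap actB ψ F) {u}).toReal| ≤ ε

/-- `act` is a probability-measure-preserving action of the group `G`. -/
def IsPMPAction {G X : Type*} [Group G] [MeasurableSpace X]
    (act : G → X → X) (μ : Measure X) : Prop :=
  (∀ x, act 1 x = x) ∧ (∀ g h x, act (g * h) x = act g (act h x)) ∧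
    ∀ g, MeasurePreserving (act g) μ μ

/-- The action `act` is (essentially) free. -/
def IsFreeAction {G X : Type*} [Group G] [MeasurableSpace X]
    (act : G → X → X) (μ : Measure X) : Prop :=
  ∀ g : G, g ≠ 1 → μ {x | act g x = x} = 0

open MeasureTheory

section Dist1
open symmDiff
variable {α β : Type*} [MeasurableSpace α] [Countable α] [MeasurableSingletonClass α]
  [MeasurableSpace β] [Countable β] [MeasurableSingletonClass β]

lemma meas_eq_tsum (p : Measure α) (S : Set α) : p S = ∑' u : S, p {(u : α)} := by
  have h : S = ⋃ u : S, {(u : α)} := by ext x; simp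
  conv_lhs => rw [h]
  rw [measure_iUnion ?_ fun u : S => measurableSet_singleton ((u : α))]
  intro u v huv
  simp only [Function.onFun, Set.disjoint_singleton]
  exact fun hc => huv (Subtype.coe_injective hc)

lemma measReal_eq_tsum (p : Measure α) [IsFiniteMeasure p] (S : Set α) :
    (p S).toReal = ∑' u : S, (p {(u : α)}).toReal := by
  rw [meas_eq_tsum p S, ENNReal.tsum_toReal_eq fun _ => measure_ne_top _ _]

lemma tsum_meas_singleton (p : Measure α) : ∑' u : α, p {u} = p Set.univ := by
  rw [meas_eq_tsum p Set.univ, tsum_univ fun u : α => p {u}]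

lemma summable_measReal (p : Measure α) [IsFiniteMeasure p] :
    Summable fun u : α => (p {u}).toReal := by
  apply ENNReal.summable_toReal
  rw [tsum_meas_singleton]
  exact measure_ne_top _ _

lemma tsum_measReal_singleton (p : Measure α) [IsProbabilityMeasure p] :
    ∑' u : α, (p {u}).toReal = 1 := by
  rw [← tsum_univ fun u : α => (p {u}).toReal, ← measReal_eq_tsum, measure_univ,
    ENNReal.toReal_one]

/-- ℓ¹ distance between two measures on a countable discrete measurable space. -/
noncomputable def dist1 (p q : Measure α) : ℝ :=
  ∑' u : α, |(p {u}).toReal - (q {u}).toReal|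

lemma summable_dist1 (p q : Measure α) [IsFiniteMeasure p] [IsFiniteMeasure q] :
    Summable fun u : α => |(p {u}).toReal - (q {u}).toReal| := by
  apply Summable.of_nonneg_of_le (fun _ => abs_nonneg _)
    (fun u => ?_) ((summable_measReal p).add (summable_measReal q))
  calc |(p {u}).toReal - (q {u}).toReal| ≤ |(p {u}).toReal| + |(q {u}).toReal| := abs_sub _ _
  _ = (p {u}).toReal + (q {u}).toReal := by
      rw [abs_of_nonneg ENNReal.toReal_nonneg, abs_of_nonneg ENNReal.toReal_nonneg]

lemma dist1_triangle (p q r : Measure α) [IsFiniteMeasure p] [IsFiniteMeasure q]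
    [IsFiniteMeasure r] : dist1 p r ≤ dist1 p q + dist1 q r := by
  rw [dist1, dist1, dist1, ← Summable.tsum_add (summable_dist1 p q) (summable_dist1 q r)]
  exact Summable.tsum_le_tsum (fun u => abs_sub_le _ _ _) (summable_dist1 p r)
    ((summable_dist1 p q).add (summable_dist1 q r))

lemma dist1_map_le (T : α → β) (p q : Measure α) [IsFiniteMeasure p] [IsFiniteMeasure q] :
    dist1 (p.map T) (q.map T) ≤ dist1 p q := by
  have hT : Measurable T := measurable_of_countable T
  haveI : IsFiniteMeasure (p.map T) := Measure.isFiniteMeasure_map p T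
  haveI : IsFiniteMeasure (q.map T) := Measure.isFiniteMeasure_map q T
  set f : α → ℝ := fun u => |(p {u}).toReal - (q {u}).toReal| with hf
  have hfs : Summable f := summable_dist1 p q
  have hfib : ∀ v : β, Summable fun u : {u // T u = v} => f u.1 := fun v =>
    hfs.subtype {u | T u = v}
  have hsig : Summable fun x : Σ v : β, {u // T u = v} => f x.2.1 := by
    have := (Equiv.summable_iff (Equiv.sigmaFiberEquiv T)).2 hfs
    exact this
  have key : ∀ v : β, |((p.map T) {v}).toReal - ((q.map T) {v}).toReal|
      ≤ ∑' u : {u // T u = v}, f u.1 := by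
    intro v
    rw [Measure.map_apply hT (measurableSet_singleton v),
      Measure.map_apply hT (measurableSet_singleton v)]
    have hS : T ⁻¹' {v} = {u | T u = v} := rfl
    have hp : Summable fun u : {u | T u = v} => (p {(u:α)}).toReal :=
      (summable_measReal p).subtype _
    have hq : Summable fun u : {u | T u = v} => (q {(u:α)}).toReal :=
      (summable_measReal q).subtype _
    have h2 : Summable fun u : {u | T u = v} =>
        ‖(p {(u:α)}).toReal - (q {(u:α)}).toReal‖ := by
      simp only [Real.norm_eq_abs]; exact hfs.subtype {u | T u = v}
    rw [hS, measReal_eq_tsum p, measReal_eq_tsum q, ← Summable.tsum_sub hp hq]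
    have := norm_tsum_le_tsum_norm h2; simp only [Real.norm_eq_abs] at this; exact this
  calc dist1 (p.map T) (q.map T)
      ≤ ∑' v : β, ∑' u : {u // T u = v}, f u.1 :=
        Summable.tsum_le_tsum key (summable_dist1 _ _) hsig.sigma
    _ = ∑' x : Σ v : β, {u // T u = v}, f x.2.1 := (hsig.tsum_sigma' (fun v => hfib v)).symm
    _ = ∑' u : α, f u := Equiv.tsum_eq (Equiv.sigmaFiberEquiv T) f
    _ = dist1 p q := rfl


lemma dist1_prod_le (p₁ q₁ : Measure α) (p₂ q₂ : Measure β)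
    [IsProbabilityMeasure p₁] [IsProbabilityMeasure q₁]
    [IsProbabilityMeasure p₂] [IsProbabilityMeasure q₂] :
    dist1 (p₁.prod p₂) (q₁.prod q₂) ≤ dist1 p₁ q₁ + dist1 p₂ q₂ := by
  set a : α → ℝ := fun u => (p₁ {u}).toReal
  set c : α → ℝ := fun u => (q₁ {u}).toReal
  set b : β → ℝ := fun v => (p₂ {v}).toReal
  set d : β → ℝ := fun v => (q₂ {v}).toReal
  have hsingle : ∀ (r₁ : Measure α) (r₂ : Measure β) (w : α × β), [SFinite r₂] →
      (r₁.prod r₂) {w} = r₁ {w.1} * r₂ {w.2} := by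
    rintro r₁ r₂ ⟨u, v⟩ _
    rw [← Set.singleton_prod_singleton, Measure.prod_prod]
  have hpt : ∀ w : α × β,
      |((p₁.prod p₂) {w}).toReal - ((q₁.prod q₂) {w}).toReal|
        ≤ |a w.1 - c w.1| * b w.2 + c w.1 * |b w.2 - d w.2| := by
    intro w
    rw [hsingle p₁ p₂ w, hsingle q₁ q₂ w, ENNReal.toReal_mul, ENNReal.toReal_mul]
    have h0 : a w.1 * b w.2 - c w.1 * d w.2
        = (a w.1 - c w.1) * b w.2 + c w.1 * (b w.2 - d w.2) := by ring
    calc |a w.1 * b w.2 - c w.1 * d w.2|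
        ≤ |(a w.1 - c w.1) * b w.2| + |c w.1 * (b w.2 - d w.2)| := by
          rw [h0]; exact abs_add_le _ _
      _ = |a w.1 - c w.1| * b w.2 + c w.1 * |b w.2 - d w.2| := by
          rw [abs_mul, abs_mul, abs_of_nonneg (ENNReal.toReal_nonneg : (0:ℝ) ≤ b w.2),
            abs_of_nonneg (ENNReal.toReal_nonneg : (0:ℝ) ≤ c w.1)]
  have hS1 : Summable fun w : α × β => |a w.1 - c w.1| * b w.2 :=
    (summable_dist1 p₁ q₁).mul_of_nonneg (summable_measReal p₂)
      (fun _ => abs_nonneg _) (fun _ => ENNReal.toReal_nonneg)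
  have hS2 : Summable fun w : α × β => c w.1 * |b w.2 - d w.2| :=
    (summable_measReal q₁).mul_of_nonneg (summable_dist1 p₂ q₂)
      (fun _ => ENNReal.toReal_nonneg) (fun _ => abs_nonneg _)
  calc dist1 (p₁.prod p₂) (q₁.prod q₂)
      ≤ ∑' w : α × β, (|a w.1 - c w.1| * b w.2 + c w.1 * |b w.2 - d w.2|) :=
        Summable.tsum_le_tsum hpt (summable_dist1 _ _) (hS1.add hS2)
    _ = (∑' w : α × β, |a w.1 - c w.1| * b w.2)
        + ∑' w : α × β, c w.1 * |b w.2 - d w.2| := Summable.tsum_add hS1 hS2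
    _ = (∑' u : α, |a u - c u|) * (∑' v : β, b v)
        + (∑' u : α, c u) * (∑' v : β, |b v - d v|) := by
        rw [← Summable.tsum_mul_tsum (summable_dist1 p₁ q₁) (summable_measReal p₂) hS1,
          ← Summable.tsum_mul_tsum (summable_measReal q₁) (summable_dist1 p₂ q₂) hS2]
    _ = dist1 p₁ q₁ + dist1 p₂ q₂ := by
        rw [tsum_measReal_singleton p₂, tsum_measReal_singleton q₁, mul_one, one_mul]
        rfl

lemma dist1_map_couple {Z : Type*} [MeasurableSpace Z] (m : Measure Z) [IsFiniteMeasure m]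
    (Φ Ψ : Z → α) (hΦ : Measurable Φ) (hΨ : Measurable Ψ) :
    dist1 (m.map Φ) (m.map Ψ) ≤ 2 * (m {z | Φ z ≠ Ψ z}).toReal := by
  set E := {z | Φ z ≠ Ψ z} with hEdef
  have hE : MeasurableSet E := by
    have hd : MeasurableSet {p : α × α | p.1 ≠ p.2} :=
      Set.Countable.measurableSet (Set.to_countable _)
    exact (hΦ.prodMk hΨ) hd
  have hcov : ∀ (Θ : Z → α), Measurable Θ → (⋃ u : α, Θ ⁻¹' {u} ∩ E) = E := by
    intro Θ _; ext z; simp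
  have hdisj : ∀ (Θ : Z → α), Pairwise (Function.onFun Disjoint fun u : α => Θ ⁻¹' {u} ∩ E) := by
    intro Θ u v huv
    refine Set.disjoint_left.2 fun z hz hz' => huv ?_
    have h1 : Θ z = u := hz.1
    have h2 : Θ z = v := hz'.1
    rw [← h1, h2]
  have hsum : ∀ (Θ : Z → α) (hΘ : Measurable Θ),
      ∑' u : α, (m (Θ ⁻¹' {u} ∩ E)).toReal = (m E).toReal ∧
      Summable fun u : α => (m (Θ ⁻¹' {u} ∩ E)).toReal := by
    intro Θ hΘ
    have h1 : m E = ∑' u : α, m (Θ ⁻¹' {u} ∩ E) := by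
      conv_lhs => rw [← hcov Θ hΘ]
      exact measure_iUnion (hdisj Θ)
        (fun u => (hΘ (measurableSet_singleton u)).inter hE)
    constructor
    · rw [h1, ENNReal.tsum_toReal_eq fun _ => measure_ne_top _ _]
    · exact ENNReal.summable_toReal (by rw [← h1]; exact measure_ne_top _ _)
  have key : ∀ u : α, |((m.map Φ) {u}).toReal - ((m.map Ψ) {u}).toReal|
      ≤ (m (Φ ⁻¹' {u} ∩ E)).toReal + (m (Ψ ⁻¹' {u} ∩ E)).toReal := by
    intro u
    rw [Measure.map_apply hΦ (measurableSet_singleton u),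
      Measure.map_apply hΨ (measurableSet_singleton u)]
    have hdiff : Φ ⁻¹' {u} \ E = Ψ ⁻¹' {u} \ E := by
      ext z
      simp only [Set.mem_diff, Set.mem_preimage, Set.mem_singleton_iff, hEdef,
        Set.mem_setOf_eq, not_not]
      constructor
      · rintro ⟨h1, h2⟩; exact ⟨h2 ▸ h1, h2⟩
      · rintro ⟨h1, h2⟩; exact ⟨h2.symm ▸ h1, h2⟩
    have e1 : m (Φ ⁻¹' {u}) = m (Φ ⁻¹' {u} ∩ E) + m (Φ ⁻¹' {u} \ E) :=
      (measure_inter_add_diff _ hE).symm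
    have e2 : m (Ψ ⁻¹' {u}) = m (Ψ ⁻¹' {u} ∩ E) + m (Ψ ⁻¹' {u} \ E) :=
      (measure_inter_add_diff _ hE).symm
    rw [e1, e2, ← hdiff, ENNReal.toReal_add (measure_ne_top _ _) (measure_ne_top _ _),
      ENNReal.toReal_add (measure_ne_top _ _) (measure_ne_top _ _)]
    rw [add_sub_add_right_eq_sub]
    calc |(m (Φ ⁻¹' {u} ∩ E)).toReal - (m (Ψ ⁻¹' {u} ∩ E)).toReal|
        ≤ |(m (Φ ⁻¹' {u} ∩ E)).toReal| + |(m (Ψ ⁻¹' {u} ∩ E)).toReal| := abs_sub _ _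
      _ = (m (Φ ⁻¹' {u} ∩ E)).toReal + (m (Ψ ⁻¹' {u} ∩ E)).toReal := by
          rw [abs_of_nonneg ENNReal.toReal_nonneg, abs_of_nonneg ENNReal.toReal_nonneg]
  haveI : IsFiniteMeasure (m.map Φ) := Measure.isFiniteMeasure_map m Φ
  haveI : IsFiniteMeasure (m.map Ψ) := Measure.isFiniteMeasure_map m Ψ
  calc dist1 (m.map Φ) (m.map Ψ)
      ≤ ∑' u : α, ((m (Φ ⁻¹' {u} ∩ E)).toReal + (m (Ψ ⁻¹' {u} ∩ E)).toReal) :=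
        Summable.tsum_le_tsum key (summable_dist1 _ _) (((hsum Φ hΦ).2).add ((hsum Ψ hΨ).2))
    _ = (m E).toReal + (m E).toReal := by
        rw [Summable.tsum_add (hsum Φ hΦ).2 (hsum Ψ hΨ).2, (hsum Φ hΦ).1, (hsum Ψ hΨ).1]
    _ = 2 * (m E).toReal := by ring


end Dist1

section Obs
open symmDiff

lemma obsMap_measurable {G X : Type*} [MeasurableSpace X] {act : G → X → X}
    (hact : ∀ g, Measurable (act g)) {φ : X → ℕ} (hφ : Measurable φ) (F : Finset G) :
    Measurable (obsMap act φ F) :=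
  measurable_pi_lambda _ fun f => hφ.comp (hact f)

lemma measurableSet_ne_fun {X : Type*} [MeasurableSpace X] {φ χ : X → ℕ}
    (hφ : Measurable φ) (hχ : Measurable χ) : MeasurableSet {z | φ z ≠ χ z} := by
  have hd : MeasurableSet {p : ℕ × ℕ | p.1 ≠ p.2} :=
    Set.Countable.measurableSet (Set.to_countable _)
  exact (hφ.prodMk hχ) hd

lemma measure_obs_ne_le {G X : Type*} [Group G] [MeasurableSpace X] {act : G → X → X}
    {m : Measure X} (h : IsPMPAction act m) {φ χ : X → ℕ}
    (hφ : Measurable φ) (hχ : Measurable χ) (F : Finset G) :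
    m {z | obsMap act φ F z ≠ obsMap act χ F z} ≤ F.card * m {z | φ z ≠ χ z} := by
  set E := {z | φ z ≠ χ z} with hE
  have hEm : MeasurableSet E := measurableSet_ne_fun hφ hχ
  have hsub : {z | obsMap act φ F z ≠ obsMap act χ F z} ⊆ ⋃ f ∈ F, act f ⁻¹' E := by
    intro z hz
    by_contra hc
    apply hz
    simp only [Set.mem_iUnion, Set.mem_preimage, not_exists] at hc
    funext f
    have := hc f f.2
    simp only [hE, Set.mem_setOf_eq, not_not] at this
    exact this
  calc m {z | obsMap act φ F z ≠ obsMap act χ F z} ≤ m (⋃ f ∈ F, act f ⁻¹' E) :=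
      measure_mono hsub
    _ ≤ ∑ f ∈ F, m (act f ⁻¹' E) := measure_biUnion_finset_le F _
    _ = ∑ _f ∈ F, m E := Finset.sum_congr rfl fun f _ =>
        (h.2.2 f).measure_preimage hEm.nullMeasurableSet
    _ = F.card * m E := by rw [Finset.sum_const, nsmul_eq_mul]

lemma rect_approx {X Y : Type*} [MeasurableSpace X] [MeasurableSpace Y]
    (μ : Measure X) (ν : Measure Y) [IsProbabilityMeasure μ] [IsProbabilityMeasure ν]
    (φ : X × Y → ℕ) (hφ : Measurable φ) (δ : ℝ) (hδ : 0 < δ) :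
    ∃ (φ₁ : X → ℕ) (φ₂ : Y → ℕ) (g : ℕ → ℕ → ℕ), Measurable φ₁ ∧ Measurable φ₂ ∧
      μ.prod ν {z | φ z ≠ g (φ₁ z.1) (φ₂ z.2)} ≤ ENNReal.ofReal δ := by
  classical
  set m := μ.prod ν with hm
  -- the algebra of "rectangle-like" sets
  set 𝒜 : Set (Set (X × Y)) := {S | ∃ (f₁ : X → ℕ) (f₂ : Y → ℕ) (g : ℕ → ℕ → Bool),
    Measurable f₁ ∧ Measurable f₂ ∧ S = {z | g (f₁ z.1) (f₂ z.2) = true}} with h𝒜def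
  have h𝒜 : IsSetAlgebra 𝒜 := by
    constructor
    · exact ⟨fun _ => 0, fun _ => 0, fun _ _ => false, measurable_const, measurable_const,
        by ext z; simp⟩
    · rintro S ⟨f₁, f₂, g, h1, h2, rfl⟩
      exact ⟨f₁, f₂, fun a b => !g a b, h1, h2, by ext z; simp⟩
    · rintro S T ⟨f₁, f₂, g, h1, h2, rfl⟩ ⟨k₁, k₂, g', h3, h4, rfl⟩
      refine ⟨fun x => Nat.pair (f₁ x) (k₁ x), fun y => Nat.pair (f₂ y) (k₂ y),
        fun a b => g a.unpair.1 b.unpair.1 || g' a.unpair.2 b.unpair.2, ?_, ?_, ?_⟩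
      · exact (measurable_of_countable (fun p : ℕ × ℕ => Nat.pair p.1 p.2)).comp
          (h1.prodMk h3)
      · exact (measurable_of_countable (fun p : ℕ × ℕ => Nat.pair p.1 p.2)).comp
          (h2.prodMk h4)
      · ext z; simp [Nat.unpair_pair]
  have hgen : (inferInstance : MeasurableSpace (X × Y)) = MeasurableSpace.generateFrom 𝒜 := by
    apply le_antisymm
    · rw [← generateFrom_prod]
      apply MeasurableSpace.generateFrom_le
      rintro S ⟨s, hs, t, ht, rfl⟩
      apply MeasurableSpace.measurableSet_generateFrom
      refine ⟨s.indicator (fun _ => 1), t.indicator (fun _ => 1),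
        fun a b => decide (a = 1 ∧ b = 1),
        Measurable.indicator measurable_const hs,
        Measurable.indicator measurable_const ht, ?_⟩
      ext ⟨x, y⟩
      by_cases hx : x ∈ s <;> by_cases hy : y ∈ t <;>
        simp [Set.indicator_of_mem, Set.indicator_of_notMem, hx, hy]
    · apply MeasurableSpace.generateFrom_le
      rintro S ⟨f₁, f₂, g, h1, h2, rfl⟩
      have : {z : X × Y | g (f₁ z.1) (f₂ z.2) = true}
          = (fun z : X × Y => (f₁ z.1, f₂ z.2)) ⁻¹' {p : ℕ × ℕ | g p.1 p.2 = true} := rfl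
      rw [this]
      exact ((h1.comp measurable_fst).prodMk (h2.comp measurable_snd))
        (Set.Countable.measurableSet (Set.to_countable _))
  have hdense : m.MeasureDense 𝒜 :=
    Measure.MeasureDense.of_generateFrom_isSetAlgebra_finite m h𝒜 hgen
  -- tail bound
  have hA : ∀ N : ℕ, m {z | N ≤ φ z} = ∑' (k : ℕ), m (φ ⁻¹' {k + N}) := by
    intro N
    have hcov : {z | N ≤ φ z} = ⋃ k : ℕ, φ ⁻¹' {k + N} := by
      ext z
      simp only [Set.mem_setOf_eq, Set.mem_iUnion, Set.mem_preimage, Set.mem_singleton_iff]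
      constructor
      · intro h; exact ⟨φ z - N, by omega⟩
      · rintro ⟨k, hk⟩; omega
    rw [hcov, measure_iUnion ?_ fun k => hφ (measurableSet_singleton _)]
    intro k l hkl
    refine Set.disjoint_left.2 fun z hz hz' => hkl ?_
    simp only [Set.mem_preimage, Set.mem_singleton_iff] at hz hz'
    omega
  have hne : ∑' (k : ℕ), m (φ ⁻¹' {k}) ≠ ⊤ := by
    have h0 := hA 0
    simp only [add_zero, Nat.zero_le, Set.setOf_true] at h0
    rw [← h0]
    exact measure_ne_top _ _
  have hhalf : (0:ENNReal) < ENNReal.ofReal (δ / 2) := ENNReal.ofReal_pos.2 (by linarith)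
  obtain ⟨N₀, hN₀⟩ := (Filter.eventually_atTop).1
    ((ENNReal.tendsto_sum_nat_add (fun k => m (φ ⁻¹' {k})) hne).eventually
      (gt_mem_nhds hhalf))
  set N := N₀ + 1 with hN
  have hNpos : 0 < N := Nat.succ_pos _
  have htail : m {z | N ≤ φ z} ≤ ENNReal.ofReal (δ / 2) := by
    rw [hA N]
    exact (hN₀ N (Nat.le_succ _)).le
  -- approximation of each level set
  have happ : ∀ n : ℕ, ∃ (f₁ : X → ℕ) (f₂ : Y → ℕ) (g : ℕ → ℕ → Bool),
      Measurable f₁ ∧ Measurable f₂ ∧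
      m ((φ ⁻¹' {n}) ∆ {w : X × Y | g (f₁ w.1) (f₂ w.2) = true})
        ≤ ENNReal.ofReal (δ / (2 * N)) := by
    intro n
    rcases hdense.approx (φ ⁻¹' {n}) (hφ (measurableSet_singleton n)) (measure_ne_top m _)
      (δ / (2 * N)) (by positivity) with ⟨T, hT𝒜, hTm⟩
    rcases hT𝒜 with ⟨f₁, f₂, g, h1, h2, rfl⟩
    exact ⟨f₁, f₂, g, h1, h2, hTm.le⟩
  choose F1 F2 Gg hF1 hF2 happrox using happ
  -- combine
  obtain ⟨enc, henc⟩ := Countable.exists_injective_nat (Fin N → ℕ)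
  set vecX : X → (Fin N → ℕ) := fun x i => F1 i x with hvecX
  set vecY : Y → (Fin N → ℕ) := fun y i => F2 i y with hvecY
  have hvecXm : Measurable vecX := measurable_pi_lambda _ fun i => hF1 i
  have hvecYm : Measurable vecY := measurable_pi_lambda _ fun i => hF2 i
  set Φ₁ : X → ℕ := fun x => enc (vecX x) with hΦ₁def
  set Φ₂ : Y → ℕ := fun y => enc (vecY y) with hΦ₂def
  have hΦ₁ : Measurable Φ₁ := (measurable_of_countable enc).comp hvecXm
  have hΦ₂ : Measurable Φ₂ := (measurable_of_countable enc).comp hvecYm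
  set G : ℕ → ℕ → ℕ := fun u v =>
    if hu : ∃ w : Fin N → ℕ, enc w = u then
      if hv : ∃ w : Fin N → ℕ, enc w = v then
        if h : ∃! n : Fin N, Gg n (hu.choose n) (hv.choose n) = true then (h.choose : ℕ)
        else 0
      else 0
    else 0
    with hGdef
  set Bad : Set (X × Y) := {z | N ≤ φ z} ∪
    ⋃ n ∈ Finset.range N, ((φ ⁻¹' {n}) ∆ {w : X × Y | Gg n (F1 n w.1) (F2 n w.2) = true})
    with hBad
  have hBadMeas : m Bad ≤ ENNReal.ofReal δ := by
    calc m Bad ≤ m {z | N ≤ φ z}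
        + m (⋃ n ∈ Finset.range N,
          ((φ ⁻¹' {n}) ∆ {w : X × Y | Gg n (F1 n w.1) (F2 n w.2) = true})) :=
        measure_union_le _ _
      _ ≤ ENNReal.ofReal (δ / 2) + ∑ n ∈ Finset.range N, ENNReal.ofReal (δ / (2 * N)) := by
        refine add_le_add htail ((measure_biUnion_finset_le _ _).trans ?_)
        exact Finset.sum_le_sum fun n _ => happrox n
      _ ≤ ENNReal.ofReal (δ / 2) + ENNReal.ofReal (δ / 2) := by
        refine add_le_add le_rfl ?_
        rw [Finset.sum_const, Finset.card_range, nsmul_eq_mul]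
        rw [← ENNReal.ofReal_natCast, ← ENNReal.ofReal_mul (by positivity)]
        apply ENNReal.ofReal_le_ofReal
        have h5 : (N:ℝ) * (δ / (2 * N)) = δ / 2 := by
          field_simp
        rw [h5]
      _ = ENNReal.ofReal δ := by
        rw [← ENNReal.ofReal_add (by positivity) (by positivity)]
        norm_num
  have hgood : ∀ z : X × Y, z ∉ Bad → G (Φ₁ z.1) (Φ₂ z.2) = φ z := by
    intro z hz
    simp only [hBad, Set.mem_union, Set.mem_setOf_eq, Set.mem_iUnion, Finset.mem_range,
      not_or, not_exists] at hz
    obtain ⟨hz1, hz2⟩ := hz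
    have hφz : φ z < N := by omega
    set n₀ : Fin N := ⟨φ z, hφz⟩ with hn₀
    have hiff : ∀ n : Fin N, (Gg n (vecX z.1 n) (vecY z.2 n) = true) ↔ n = n₀ := by
      intro n
      have hnotin := hz2 n n.2
      rw [Set.mem_symmDiff] at hnotin
      push_neg at hnotin
      obtain ⟨ha, hb⟩ := hnotin
      constructor
      · intro h
        have hz' : z ∈ φ ⁻¹' {(n : ℕ)} := hb h
        have hval : φ z = (n : ℕ) := hz'
        exact Fin.ext hval.symm
      · intro h
        subst h
        exact ha rfl
    have hu : ∃ w : Fin N → ℕ, enc w = Φ₁ z.1 := ⟨vecX z.1, rfl⟩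
    have hv : ∃ w : Fin N → ℕ, enc w = Φ₂ z.2 := ⟨vecY z.2, rfl⟩
    have e1 : hu.choose = vecX z.1 := henc hu.choose_spec
    have e2 : hv.choose = vecY z.2 := henc hv.choose_spec
    simp only [hGdef]
    rw [dif_pos hu, dif_pos hv, e1, e2]
    have hexu : ∃! n : Fin N, Gg n (vecX z.1 n) (vecY z.2 n) = true :=
      ⟨n₀, (hiff n₀).2 rfl, fun n hn => (hiff n).1 hn⟩
    rw [dif_pos hexu]
    have hch : hexu.choose = n₀ := (hiff _).1 hexu.choose_spec.1
    rw [hch]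
  refine ⟨Φ₁, Φ₂, G, hΦ₁, hΦ₂, le_trans (measure_mono ?_) hBadMeas⟩
  intro z hz
  by_contra hc
  exact hz (hgood z hc).symm

end Obs

/-- Theorem (product of weakly contained actions): if `a ≺ a'` and `b ≺ b'` then
`a × b ≺ a' × b'`. -/
theorem weaklyContained_prod {G : Type*} [Group G] [Countable G]
    {X X' Y Y' : Type*} [MeasurableSpace X] [MeasurableSpace X']
    [MeasurableSpace Y] [MeasurableSpace Y']
    [StandardBorelSpace X] [StandardBorelSpace X'] [StandardBorelSpace Y] [StandardBorelSpace Y']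
    (μ : Measure X) [IsProbabilityMeasure μ] (μ' : Measure X') [IsProbabilityMeasure μ']
    (ν : Measure Y) [IsProbabilityMeasure ν] (ν' : Measure Y') [IsProbabilityMeasure ν']
    (a : G → X → X) (ha : IsPMPAction a μ) (a' : G → X' → X') (ha' : IsPMPAction a' μ')
    (b : G → Y → Y) (hb : IsPMPAction b ν) (b' : G → Y' → Y') (hb' : IsPMPAction b' ν')
    (haa' : WeaklyContained a μ a' μ') (hbb' : WeaklyContained b ν b' ν') :
    WeaklyContained (fun g p => (a g p.1, b g p.2)) (μ.prod ν)
      (fun g p => (a' g p.1, b' g p.2)) (μ'.prod ν') := by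
  intro ε hε F φ hφ
  set actp : G → X × Y → X × Y := fun g p => (a g p.1, b g p.2) with hactp
  set actp' : G → X' × Y' → X' × Y' := fun g p => (a' g p.1, b' g p.2) with hactp'
  set m : Measure (X × Y) := μ.prod ν with hm
  set m' : Measure (X' × Y') := μ'.prod ν' with hm'
  have hactm : ∀ f : G, Measurable (actp f) := fun f =>
    ((ha.2.2 f).measurable.comp measurable_fst).prodMk
      ((hb.2.2 f).measurable.comp measurable_snd)
  have hactm' : ∀ f : G, Measurable (actp' f) := fun f =>
    ((ha'.2.2 f).measurable.comp measurable_fst).prodMk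
      ((hb'.2.2 f).measurable.comp measurable_snd)
  have hPMP : IsPMPAction actp m := by
    refine ⟨fun p => ?_, fun g h p => ?_, fun g => (ha.2.2 g).prod (hb.2.2 g)⟩
    · show (a 1 p.1, b 1 p.2) = p
      rw [ha.1, hb.1]
    · show (a (g * h) p.1, b (g * h) p.2) = (a g (a h p.1), b g (b h p.2))
      rw [ha.2.1, hb.2.1]
  set δ : ℝ := ε / (8 * (F.card + 1)) with hδdef
  have hδ : 0 < δ := by positivity
  obtain ⟨φ₁, φ₂, g, hφ₁, hφ₂, hclose⟩ := rect_approx μ ν φ hφ δ hδ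
  set χ : X × Y → ℕ := fun z => g (φ₁ z.1) (φ₂ z.2) with hχ
  have hχm : Measurable χ :=
    (measurable_of_countable (fun p : ℕ × ℕ => g p.1 p.2)).comp
      ((hφ₁.comp measurable_fst).prodMk (hφ₂.comp measurable_snd))
  obtain ⟨ψ₁, hψ₁, hd1⟩ := haa' (ε / 4) (by positivity) F φ₁ hφ₁
  obtain ⟨ψ₂, hψ₂, hd2⟩ := hbb' (ε / 4) (by positivity) F φ₂ hφ₂
  set ψ : X' × Y' → ℕ := fun p => g (ψ₁ p.1) (ψ₂ p.2) with hψdef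
  have hψm : Measurable ψ :=
    (measurable_of_countable (fun p : ℕ × ℕ => g p.1 p.2)).comp
      ((hψ₁.comp measurable_fst).prodMk (hψ₂.comp measurable_snd))
  refine ⟨ψ, hψm, ?_⟩
  have hobsφ : Measurable (obsMap actp φ F) := obsMap_measurable hactm hφ F
  have hobsχ : Measurable (obsMap actp χ F) := obsMap_measurable hactm hχm F
  have hobsψ : Measurable (obsMap actp' ψ F) := obsMap_measurable hactm' hψm F
  have hobs1 : Measurable (obsMap a φ₁ F) :=
    obsMap_measurable (fun f => (ha.2.2 f).measurable) hφ₁ F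
  have hobs2 : Measurable (obsMap b φ₂ F) :=
    obsMap_measurable (fun f => (hb.2.2 f).measurable) hφ₂ F
  have hobs1' : Measurable (obsMap a' ψ₁ F) :=
    obsMap_measurable (fun f => (ha'.2.2 f).measurable) hψ₁ F
  have hobs2' : Measurable (obsMap b' ψ₂ F) :=
    obsMap_measurable (fun f => (hb'.2.2 f).measurable) hψ₂ F
  haveI : IsProbabilityMeasure (m.map (obsMap actp φ F)) :=
    Measure.isProbabilityMeasure_map hobsφ.aemeasurable
  haveI : IsProbabilityMeasure (m.map (obsMap actp χ F)) :=
    Measure.isProbabilityMeasure_map hobsχ.aemeasurable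
  haveI : IsProbabilityMeasure (m'.map (obsMap actp' ψ F)) :=
    Measure.isProbabilityMeasure_map hobsψ.aemeasurable
  haveI : IsProbabilityMeasure (μ.map (obsMap a φ₁ F)) :=
    Measure.isProbabilityMeasure_map hobs1.aemeasurable
  haveI : IsProbabilityMeasure (ν.map (obsMap b φ₂ F)) :=
    Measure.isProbabilityMeasure_map hobs2.aemeasurable
  haveI : IsProbabilityMeasure (μ'.map (obsMap a' ψ₁ F)) :=
    Measure.isProbabilityMeasure_map hobs1'.aemeasurable
  haveI : IsProbabilityMeasure (ν'.map (obsMap b' ψ₂ F)) :=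
    Measure.isProbabilityMeasure_map hobs2'.aemeasurable
  show dist1 (m.map (obsMap actp φ F)) (m'.map (obsMap actp' ψ F)) ≤ ε
  have hstep1 : dist1 (m.map (obsMap actp φ F)) (m.map (obsMap actp χ F)) ≤ ε / 2 := by
    have h1 := dist1_map_couple m _ _ hobsφ hobsχ
    have h2 := measure_obs_ne_le hPMP hφ hχm F
    have hclose' : m {z | φ z ≠ χ z} ≤ ENNReal.ofReal δ := hclose
    have h3 : m {z | obsMap actp φ F z ≠ obsMap actp χ F z}
        ≤ (F.card : ENNReal) * ENNReal.ofReal δ :=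
      le_trans h2 (mul_le_mul_right hclose' _)
    have h4 : ((F.card : ENNReal) * ENNReal.ofReal δ).toReal = F.card * δ := by
      rw [ENNReal.toReal_mul, ENNReal.toReal_natCast, ENNReal.toReal_ofReal hδ.le]
    have h5 := ENNReal.toReal_mono
      (ENNReal.mul_ne_top (ENNReal.natCast_ne_top _) ENNReal.ofReal_ne_top) h3
    rw [h4] at h5
    have h6 : 8 * ((F.card : ℝ) + 1) * δ = ε := by
      rw [hδdef]; field_simp
    have hcard : (0:ℝ) ≤ (F.card : ℝ) := Nat.cast_nonneg _
    calc dist1 (m.map (obsMap actp φ F)) (m.map (obsMap actp χ F))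
        ≤ 2 * (m {z | obsMap actp φ F z ≠ obsMap actp χ F z}).toReal := h1
      _ ≤ 2 * ((F.card : ℝ) * δ) := by linarith
      _ ≤ ε / 2 := by nlinarith [mul_nonneg hcard hδ.le, hδ.le]
  have hstep2 : dist1 (m.map (obsMap actp χ F)) (m'.map (obsMap actp' ψ F))
      ≤ ε / 4 + ε / 4 := by
    set P : (F → ℕ) × (F → ℕ) → (F → ℕ) := fun w f => g (w.1 f) (w.2 f) with hP
    have hPm : Measurable P := measurable_of_countable P
    have hfact1 : m.map (obsMap actp χ F)
        = ((μ.map (obsMap a φ₁ F)).prod (ν.map (obsMap b φ₂ F))).map P := by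
      rw [Measure.map_prod_map _ _ hobs1 hobs2, Measure.map_map hPm (hobs1.prodMap hobs2)]
      congr 1
    have hfact2 : m'.map (obsMap actp' ψ F)
        = ((μ'.map (obsMap a' ψ₁ F)).prod (ν'.map (obsMap b' ψ₂ F))).map P := by
      rw [Measure.map_prod_map _ _ hobs1' hobs2', Measure.map_map hPm (hobs1'.prodMap hobs2')]
      congr 1
    rw [hfact1, hfact2]
    refine le_trans (dist1_map_le P _ _) (le_trans (dist1_prod_le _ _ _ _)
      (add_le_add ?_ ?_))
    · exact hd1
    · exact hd2
  calc dist1 (m.map (obsMap actp φ F)) (m'.map (obsMap actp' ψ F))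
      ≤ dist1 (m.map (obsMap actp φ F)) (m.map (obsMap actp χ F))
        + dist1 (m.map (obsMap actp χ F)) (m'.map (obsMap actp' ψ F)) :=
      dist1_triangle _ _ _
    _ ≤ ε / 2 + (ε / 4 + ε / 4) := add_le_add hstep1 hstep2
    _ = ε := by ring
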